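/- arXiv:2311.08612 — 3 statements merged into one kernel-verified Lean document; each statement's English description precedes it below -/
import Mathlib

section
/- Fix a positive integer L, a natural number R, and V : ℤ × (ℤ/Lℤ) → ℝ with V(x, j) = 0 whenever |x| > R. For all E, k ∈ ℝ, the linear map T₀(E,k) on ℂ^{ℤ/Lℤ} × ℂ^{ℤ/Lℤ} is invertible, and E is an eigenvalue of H(k) if and only if there exists a nonzero vector Ψ ∈ ℂ^{ℤ/Lℤ} × ℂ^{ℤ/Lℤ} such that ∑_{n=0}^{∞} ‖T₀(E,k)ⁿ (T_V(E,k) Ψ)‖² < ∞ and ∑_{n=0}^{∞} ‖(T₀(E,k)⁻¹)ⁿ Ψ‖² < ∞. -/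
open scoped ENNReal BigOperators

noncomputable section

/-- The twisted Laplacian `Δᵏ` on `ℂ^{ℤ/Lℤ}`. -/
def deltaK (L : ℕ) (k : ℝ) (φ : ZMod L → ℂ) : ZMod L → ℂ :=
  fun j => Complex.exp (Complex.I * k) * φ (j + 1) + Complex.exp (-(Complex.I * k)) * φ (j - 1)

/-- The free transfer matrix `T₀(E,k)` on `ℂ^{ℤ/Lℤ} × ℂ^{ℤ/Lℤ}`. -/
def T0 (L : ℕ) (E k : ℝ) (Ψ : (ZMod L → ℂ) × (ZMod L → ℂ)) : (ZMod L → ℂ) × (ZMod L → ℂ) :=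
  (fun j => (E : ℂ) * Ψ.1 j - deltaK L k Ψ.1 j - Ψ.2 j, Ψ.1)

/-- The one-step transfer matrix `T_x(E,k)` through the potential `V` at site `x`. -/
def Tstep (L : ℕ) (E k : ℝ) (V : ℤ × ZMod L → ℝ) (x : ℤ)
    (Ψ : (ZMod L → ℂ) × (ZMod L → ℂ)) : (ZMod L → ℂ) × (ZMod L → ℂ) :=
  (fun j => (E : ℂ) * Ψ.1 j - deltaK L k Ψ.1 j - (V (x, j) : ℂ) * Ψ.1 j - Ψ.2 j, Ψ.1)

/-- The transfer matrix `T_V(E,k) = T_R ∘ T_{R-1} ∘ ⋯ ∘ T_{-R}` across the support of `V`. -/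
def TV (L R : ℕ) (E k : ℝ) (V : ℤ × ZMod L → ℝ)
    (Ψ : (ZMod L → ℂ) × (ZMod L → ℂ)) : (ZMod L → ℂ) × (ZMod L → ℂ) :=
  (List.range (2 * R + 1)).foldl (fun Φ i => Tstep L E k V ((i : ℤ) - (R : ℤ)) Φ) Ψ

/-- The squared Euclidean norm on `ℂ^{ℤ/Lℤ} × ℂ^{ℤ/Lℤ}`. -/
def normSq (L : ℕ) [NeZero L] (Ψ : (ZMod L → ℂ) × (ZMod L → ℂ)) : ℝ :=
  ∑ j : ZMod L, ‖Ψ.1 j‖ ^ 2 + ∑ j : ZMod L, ‖Ψ.2 j‖ ^ 2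

namespace TransferAux

abbrev Pair (L : ℕ) := (ZMod L → ℂ) × (ZMod L → ℂ)

variable (L : ℕ) (E k : ℝ)

/-- explicit inverse of `T0`. -/
def T0inv (Ψ : Pair L) : Pair L :=
  (Ψ.2, fun j => (E : ℂ) * Ψ.2 j - deltaK L k Ψ.2 j - Ψ.1 j)

lemma T0_T0inv (Ψ : Pair L) : T0 L E k (T0inv L E k Ψ) = Ψ := by
  refine Prod.ext ?_ rfl
  funext j
  show (E : ℂ) * Ψ.2 j - deltaK L k Ψ.2 j - ((E : ℂ) * Ψ.2 j - deltaK L k Ψ.2 j - Ψ.1 j) = Ψ.1 j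
  ring

lemma T0inv_T0 (Ψ : Pair L) : T0inv L E k (T0 L E k Ψ) = Ψ := by
  refine Prod.ext rfl ?_
  funext j
  show (E : ℂ) * Ψ.1 j - deltaK L k Ψ.1 j - ((E : ℂ) * Ψ.1 j - deltaK L k Ψ.1 j - Ψ.2 j) = Ψ.2 j
  ring

lemma T0_bij : Function.Bijective (T0 L E k) :=
  Function.bijective_iff_has_inverse.mpr
    ⟨T0inv L E k, T0inv_T0 L E k, T0_T0inv L E k⟩

lemma invFun_T0 : Function.invFun (T0 L E k) = T0inv L E k := by
  funext Ψ
  conv_lhs => rw [← T0_T0inv L E k Ψ]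
  exact Function.leftInverse_invFun (T0_bij L E k).injective _

variable (V : ℤ × ZMod L → ℝ)

def Tstepinv (x : ℤ) (Ψ : Pair L) : Pair L :=
  (Ψ.2, fun j => (E : ℂ) * Ψ.2 j - deltaK L k Ψ.2 j - (V (x, j) : ℂ) * Ψ.2 j - Ψ.1 j)

lemma Tstepinv_Tstep (x : ℤ) (Ψ : Pair L) :
    Tstepinv L E k V x (Tstep L E k V x Ψ) = Ψ := by
  refine Prod.ext rfl ?_
  funext j
  show (E : ℂ) * Ψ.1 j - deltaK L k Ψ.1 j - (V (x, j) : ℂ) * Ψ.1 j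
      - ((E : ℂ) * Ψ.1 j - deltaK L k Ψ.1 j - (V (x, j) : ℂ) * Ψ.1 j - Ψ.2 j) = Ψ.2 j
  ring

lemma Tstep_inj (x : ℤ) : Function.Injective (Tstep L E k V x) :=
  Function.LeftInverse.injective (Tstepinv_Tstep L E k V x)

lemma Tstep_eq_T0 (x : ℤ) (h : ∀ j, V (x, j) = 0) (Ψ : Pair L) :
    Tstep L E k V x Ψ = T0 L E k Ψ := by
  refine Prod.ext ?_ rfl
  funext j
  show (E : ℂ) * Ψ.1 j - deltaK L k Ψ.1 j - (V (x, j) : ℂ) * Ψ.1 j - Ψ.2 j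
      = (E : ℂ) * Ψ.1 j - deltaK L k Ψ.1 j - Ψ.2 j
  rw [h j]
  push_cast
  ring

lemma Tstep_zero (x : ℤ) : Tstep L E k V x 0 = 0 := by
  refine Prod.ext ?_ rfl
  funext j
  show (E : ℂ) * (0:ℂ) - deltaK L k 0 j - (V (x, j) : ℂ) * (0:ℂ) - (0:ℂ) = 0
  simp [deltaK]

section Steps

variable {L E k V} (R : ℕ) (Φ : ℤ → Pair L)
  (hstep : ∀ x : ℤ, Tstep L E k V x (Φ x) = Φ (x + 1))

include hstep

lemma snd_eq (x : ℤ) : (Φ x).2 = (Φ (x - 1)).1 := by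
  have h := hstep (x - 1)
  rw [sub_add_cancel] at h
  rw [← h]
  rfl

omit hstep in
lemma coe_list (l : List ℕ) : (do let a ← l; pure ((a : ℤ))) = l.map (fun a : ℕ => (a : ℤ)) := by
  induction l with
  | nil => rfl
  | cons a t ih => simp_all

lemma foldl_range (n : ℕ) :
    List.foldl (fun Ψ x => Tstep L E k V (x - (R : ℤ)) Ψ) (Φ (-(R : ℤ)))
      ((List.range n).map (fun a : ℕ => (a : ℤ))) = Φ ((n : ℤ) - R) := by
  induction n with
  | zero => simp
  | succ m ih =>
    rw [List.range_succ, List.map_append, List.foldl_append, ih]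
    simp only [List.map_cons, List.map_nil, List.foldl_cons, List.foldl_nil]
    rw [hstep]
    congr 1
    push_cast
    ring

lemma TV_eq : TV L R E k V (Φ (-(R : ℤ))) = Φ ((R : ℤ) + 1) := by
  have h := foldl_range (V := V) R Φ hstep (2 * R + 1)
  have e : TV L R E k V (Φ (-(R : ℤ)))
      = List.foldl (fun Ψ x => Tstep L E k V (x - (R : ℤ)) Ψ) (Φ (-(R : ℤ)))
        ((List.range (2 * R + 1)).map (fun a : ℕ => (a : ℤ))) := by
    unfold TV
    congr 1
    exact coe_list _
  rw [e, h]
  exact congrArg Φ (by push_cast; ring)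

variable (hV : ∀ (x : ℤ) (j : ZMod L), (R : ℤ) < |x| → V (x, j) = 0)
include hV

lemma iter_T0 (n : ℕ) : (T0 L E k)^[n] (Φ ((R : ℤ) + 1)) = Φ ((R : ℤ) + 1 + n) := by
  induction n with
  | zero => simp
  | succ m ih =>
    rw [Function.iterate_succ_apply', ih,
      ← Tstep_eq_T0 L E k V ((R : ℤ) + 1 + m)
        (fun j => hV _ j (by rw [abs_of_nonneg (by positivity)]; omega)), hstep]
    exact congrArg Φ (by push_cast; ring)

lemma iter_T0inv (n : ℕ) : (T0inv L E k)^[n] (Φ (-(R : ℤ))) = Φ (-(R : ℤ) - n) := by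
  induction n with
  | zero => simp
  | succ m ih =>
    rw [Function.iterate_succ_apply', ih]
    have h : T0 L E k (Φ (-(R : ℤ) - m - 1)) = Φ (-(R : ℤ) - m) := by
      rw [← Tstep_eq_T0 L E k V (-(R : ℤ) - m - 1)
        (fun j => hV _ j (by rw [abs_of_nonpos (by omega)]; omega)), hstep]
      exact congrArg Φ (by ring)
    rw [← h, T0inv_T0]
    exact congrArg Φ (by push_cast; ring)

end Steps


section Summability

variable {L : ℕ} [NeZero L]

lemma summable_cols {f : ℤ × ZMod L → ℂ} (hf : Summable fun p => ‖f p‖ ^ 2)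
    (e : ℕ → ℤ) (he : Function.Injective e) :
    Summable fun n : ℕ => ∑ j : ZMod L, ‖f (e n, j)‖ ^ 2 := by
  apply summable_sum
  intro j _
  exact hf.comp_injective fun a b h => he (Prod.ext_iff.mp h).1

lemma memℓp_two_iff (f : ℤ × ZMod L → ℂ) :
    Memℓp f 2 ↔ Summable fun p => ‖f p‖ ^ 2 := by
  rw [memℓp_gen_iff (by norm_num : (0:ℝ) < (2:ℝ≥0∞).toReal)]
  exact summable_congr fun p => by
    rw [show ((2:ℝ≥0∞).toReal) = ((2:ℕ):ℝ) by norm_num, Real.rpow_natCast]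

/-- the column squared norm. -/
def colSq (L : ℕ) [NeZero L] (f : ℤ × ZMod L → ℂ) (x : ℤ) : ℝ :=
  ∑ j : ZMod L, ‖f (x, j)‖ ^ 2

lemma colSq_nonneg (f : ℤ × ZMod L → ℂ) (x : ℤ) : 0 ≤ colSq L f x :=
  Finset.sum_nonneg fun j _ => by positivity

lemma summable_of_tails (R : ℕ) (f : ℤ × ZMod L → ℂ)
    (hfwd : Summable fun n : ℕ => colSq L f ((R:ℤ)+1+n) + colSq L f ((R:ℤ)+n))
    (hbwd : Summable fun n : ℕ => colSq L f (-(R:ℤ)-n) + colSq L f (-(R:ℤ)-n-1)) :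
    Summable fun p => ‖f p‖ ^ 2 := by
  have hf1 : Summable fun n : ℕ => colSq L f ((R:ℤ)+n) :=
    Summable.of_nonneg_of_le (fun n => colSq_nonneg _ _)
      (fun n => le_add_of_nonneg_left (colSq_nonneg _ _)) hfwd
  have hb1 : Summable fun n : ℕ => colSq L f (-(R:ℤ)-n) :=
    Summable.of_nonneg_of_le (fun n => colSq_nonneg _ _)
      (fun n => le_add_of_nonneg_right (colSq_nonneg _ _)) hbwd
  have hNat : Summable fun n : ℕ => colSq L f (n : ℤ) := by
    apply (summable_nat_add_iff R).mp
    exact hf1.congr fun n => by congr 1; push_cast; ring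
  have hNeg : Summable fun n : ℕ => colSq L f (-(n : ℤ)) := by
    apply (summable_nat_add_iff R).mp
    exact hb1.congr fun n => by congr 1; push_cast; ring
  have hZ : Summable fun x : ℤ => colSq L f x := Summable.of_nat_of_neg hNat hNeg
  rw [summable_prod_of_nonneg (fun p => by positivity)]
  refine ⟨fun x => Summable.of_finite, ?_⟩
  exact hZ.congr fun x => (tsum_fintype _).symm

end Summability

section ColPhi

variable (L : ℕ) (E k : ℝ) (V : ℤ × ZMod L → ℝ)

/-- the pair of adjacent columns of a wave function. -/
def colPhi (f : ℤ × ZMod L → ℂ) (x : ℤ) : Pair L :=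
  (fun j => f (x, j), fun j => f (x - 1, j))

lemma normSq_colPhi [NeZero L] (f : ℤ × ZMod L → ℂ) (x : ℤ) :
    normSq L (colPhi L f x) = colSq L f x + colSq L f (x - 1) := rfl

lemma colPhi_step (f : ℤ × ZMod L → ℂ)
    (hpt : ∀ (x : ℤ) (j : ZMod L),
      f (x+1, j) + f (x-1, j) + Complex.exp (Complex.I * k) * f (x, j+1)
        + Complex.exp (-(Complex.I * k)) * f (x, j-1) + (V (x, j) : ℂ) * f (x, j)
        = (E : ℂ) * f (x, j)) (x : ℤ) :
    Tstep L E k V x (colPhi L f x) = colPhi L f (x + 1) := by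
  refine Prod.ext ?_ ?_
  · funext j
    show (E : ℂ) * f (x, j) - deltaK L k (fun j => f (x, j)) j
        - (V (x, j) : ℂ) * f (x, j) - f (x - 1, j) = f (x + 1, j)
    simp only [deltaK]
    linear_combination -hpt x j
  · funext j
    show f (x, j) = f (x + 1 - 1, j)
    rw [add_sub_cancel_right]

end ColPhi

section Construction

variable (L : ℕ) (E k : ℝ) (V : ℤ × ZMod L → ℝ) (R : ℕ)

/-- forward orbit. -/
def Fwd (Ψ : Pair L) : ℕ → Pair L
  | 0 => Ψ
  | n + 1 => Tstep L E k V (-(R : ℤ) + n) (Fwd Ψ n)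

/-- backward orbit. -/
def Bwd (Ψ : Pair L) : ℕ → Pair L
  | 0 => Ψ
  | n + 1 => T0inv L E k (Bwd Ψ n)

lemma Fwd_zero (Ψ : Pair L) : Fwd L E k V R Ψ 0 = Ψ := rfl
lemma Fwd_succ (Ψ : Pair L) (n : ℕ) :
    Fwd L E k V R Ψ (n + 1) = Tstep L E k V (-(R : ℤ) + n) (Fwd L E k V R Ψ n) := rfl
lemma Bwd_zero (Ψ : Pair L) : Bwd L E k Ψ 0 = Ψ := rfl
lemma Bwd_succ (Ψ : Pair L) (n : ℕ) :
    Bwd L E k Ψ (n + 1) = T0inv L E k (Bwd L E k Ψ n) := rfl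

/-- the two-sided orbit. -/
def PhiZ (Ψ : Pair L) (x : ℤ) : Pair L :=
  if 0 ≤ x + R then Fwd L E k V R Ψ (x + R).toNat else Bwd L E k Ψ (-(x + R)).toNat

lemma PhiZ_of_ge (Ψ : Pair L) (x : ℤ) (hx : -(R : ℤ) ≤ x) :
    PhiZ L E k V R Ψ x = Fwd L E k V R Ψ (x + R).toNat := if_pos (by omega)

lemma PhiZ_of_le (Ψ : Pair L) (x : ℤ) (hx : x ≤ -(R : ℤ)) :
    PhiZ L E k V R Ψ x = Bwd L E k Ψ (-(x + R)).toNat := by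
  unfold PhiZ
  by_cases h : 0 ≤ x + R
  · rw [if_pos h]
    have h1 : (x + R).toNat = 0 := by omega
    have h2 : (-(x + R)).toNat = 0 := by omega
    rw [h1, h2, Fwd_zero, Bwd_zero]
  · rw [if_neg h]

lemma PhiZ_neg_R (Ψ : Pair L) : PhiZ L E k V R Ψ (-(R : ℤ)) = Ψ := by
  rw [PhiZ_of_le L E k V R Ψ _ le_rfl]
  have h : (-(-(R : ℤ) + R)).toNat = 0 := by omega
  rw [h, Bwd_zero]

lemma PhiZ_step (hV : ∀ (x : ℤ) (j : ZMod L), (R : ℤ) < |x| → V (x, j) = 0)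
    (Ψ : Pair L) (x : ℤ) :
    Tstep L E k V x (PhiZ L E k V R Ψ x) = PhiZ L E k V R Ψ (x + 1) := by
  rcases le_or_gt (-(R : ℤ)) x with hx | hx
  · rw [PhiZ_of_ge L E k V R Ψ x hx, PhiZ_of_ge L E k V R Ψ (x + 1) (by omega)]
    have h1 : (x + 1 + R).toNat = (x + R).toNat + 1 := by omega
    rw [h1, Fwd_succ]
    have h2 : -(R : ℤ) + ((x + R).toNat : ℤ) = x := by omega
    rw [h2]
  · rw [PhiZ_of_le L E k V R Ψ x (by omega), PhiZ_of_le L E k V R Ψ (x + 1) (by omega)]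
    have h1 : (-(x + R)).toNat = (-(x + 1 + R)).toNat + 1 := by omega
    rw [h1, Bwd_succ,
      Tstep_eq_T0 L E k V x (fun j => hV x j (by rw [abs_of_nonpos (by omega)]; omega)),
      T0_T0inv]

/-- the wave function of the two-sided orbit. -/
def fZ (Ψ : Pair L) : ℤ × ZMod L → ℂ :=
  fun p => (PhiZ L E k V R Ψ p.1).1 p.2

lemma normSq_PhiZ [NeZero L] (hV : ∀ (x : ℤ) (j : ZMod L), (R : ℤ) < |x| → V (x, j) = 0)
    (Ψ : Pair L) (x : ℤ) :
    normSq L (PhiZ L E k V R Ψ x) = colSq L (fZ L E k V R Ψ) x + colSq L (fZ L E k V R Ψ) (x - 1) := by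
  have h2 := snd_eq (PhiZ L E k V R Ψ) (PhiZ_step L E k V R hV Ψ) x
  show (∑ j : ZMod L, ‖(PhiZ L E k V R Ψ x).1 j‖ ^ 2)
      + ∑ j : ZMod L, ‖(PhiZ L E k V R Ψ x).2 j‖ ^ 2 = _
  rw [h2]
  rfl

end Construction

end TransferAux

theorem eigenvalue_iff_decaying_transfer_solution
    (L : ℕ) [NeZero L] (R : ℕ)
    (V : ℤ × ZMod L → ℝ)
    (hVsupp : ∀ (x : ℤ) (j : ZMod L), (R : ℤ) < |x| → V (x, j) = 0)
    (Hk : ℝ → (lp (fun _ : ℤ × ZMod L => ℂ) 2 →L[ℂ] lp (fun _ : ℤ × ZMod L => ℂ) 2))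
    (hHk : ∀ (k : ℝ) (ψ : lp (fun _ : ℤ × ZMod L => ℂ) 2) (x : ℤ) (j : ZMod L),
      Hk k ψ (x, j) = ψ (x + 1, j) + ψ (x - 1, j)
        + Complex.exp (Complex.I * k) * ψ (x, j + 1)
        + Complex.exp (-(Complex.I * k)) * ψ (x, j - 1)
        + (V (x, j) : ℂ) * ψ (x, j))
    (E k : ℝ) :
    Function.Bijective (T0 L E k) ∧
      ((∃ ψ : lp (fun _ : ℤ × ZMod L => ℂ) 2, ψ ≠ 0 ∧ Hk k ψ = (E : ℂ) • ψ) ↔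
        ∃ Ψ : (ZMod L → ℂ) × (ZMod L → ℂ), Ψ ≠ 0 ∧
          Summable (fun n : ℕ => normSq L ((T0 L E k)^[n] (TV L R E k V Ψ))) ∧
          Summable (fun n : ℕ => normSq L ((Function.invFun (T0 L E k))^[n] Ψ))) := by
  classical
  refine ⟨TransferAux.T0_bij L E k, ?_, ?_⟩
  · -- eigenfunction ⇒ decaying transfer solution
    rintro ⟨ψ, hψ0, heig⟩
    have hpt : ∀ (x : ℤ) (j : ZMod L),
        ψ (x+1, j) + ψ (x-1, j) + Complex.exp (Complex.I * k) * ψ (x, j+1)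
          + Complex.exp (-(Complex.I * k)) * ψ (x, j-1) + (V (x, j) : ℂ) * ψ (x, j)
          = (E : ℂ) * ψ (x, j) := by
      intro x j
      have h1 := hHk k ψ x j
      rw [heig, lp.coeFn_smul, Pi.smul_apply, smul_eq_mul] at h1
      exact h1.symm
    have hstep : ∀ x : ℤ, Tstep L E k V x (TransferAux.colPhi L (⇑ψ) x)
        = TransferAux.colPhi L (⇑ψ) (x + 1) := TransferAux.colPhi_step L E k V (⇑ψ) hpt
    have hsum : Summable fun p : ℤ × ZMod L => ‖(⇑ψ) p‖ ^ 2 :=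
      (TransferAux.memℓp_two_iff (L := L) _).mp (lp.memℓp ψ)
    refine ⟨TransferAux.colPhi L (⇑ψ) (-(R : ℤ)), ?_, ?_, ?_⟩
    · intro hΨ
      apply hψ0
      have h0f : ∀ n : ℕ, TransferAux.colPhi L (⇑ψ) (-(R : ℤ) + n) = 0 := by
        intro n
        induction n with
        | zero => simpa using hΨ
        | succ m ih =>
          have e1 : -(R : ℤ) + ((m : ℕ) + 1 : ℕ) = (-(R : ℤ) + m) + 1 := by push_cast; ring
          rw [e1, ← hstep, ih, TransferAux.Tstep_zero]
      have h0b : ∀ n : ℕ, TransferAux.colPhi L (⇑ψ) (-(R : ℤ) - n) = 0 := by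
        intro n
        induction n with
        | zero => simpa using hΨ
        | succ m ih =>
          apply TransferAux.Tstep_inj L E k V (-(R : ℤ) - ((m : ℕ) + 1 : ℕ))
          rw [hstep, TransferAux.Tstep_zero]
          have e1 : -(R : ℤ) - ((m : ℕ) + 1 : ℕ) + 1 = -(R : ℤ) - m := by push_cast; ring
          rw [e1, ih]
      have h0 : ∀ x : ℤ, TransferAux.colPhi L (⇑ψ) x = 0 := by
        intro x
        rcases le_or_gt (-(R : ℤ)) x with h | h
        · have hx : x = -(R : ℤ) + ((x + R).toNat : ℤ) := by omega
          rw [hx]; exact h0f _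
        · have hx : x = -(R : ℤ) - ((-(x + R)).toNat : ℤ) := by omega
          rw [hx]; exact h0b _
      apply lp.ext
      funext p
      have h := congrFun (congrArg Prod.fst (h0 p.1)) p.2
      simpa [TransferAux.colPhi] using h
    · have base := (TransferAux.summable_cols hsum (fun n : ℕ => (R : ℤ) + 1 + n)
          (fun a b h => by simpa using h)).add
        (TransferAux.summable_cols hsum (fun n : ℕ => (R : ℤ) + n) (fun a b h => by simpa using h))
      refine base.congr fun n => ?_
      rw [TransferAux.TV_eq R (TransferAux.colPhi L (⇑ψ)) hstep,
        TransferAux.iter_T0 R (TransferAux.colPhi L (⇑ψ)) hstep hVsupp n,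
        TransferAux.normSq_colPhi]
      have e1 : (R : ℤ) + 1 + n - 1 = (R : ℤ) + n := by ring
      rw [e1]
      rfl
    · have base := (TransferAux.summable_cols hsum (fun n : ℕ => -(R : ℤ) - n)
          (fun a b h => by simpa using h)).add
        (TransferAux.summable_cols hsum (fun n : ℕ => -(R : ℤ) - n - 1) (fun a b h => by simpa using h))
      refine base.congr fun n => ?_
      rw [TransferAux.invFun_T0 L E k,
        TransferAux.iter_T0inv R (TransferAux.colPhi L (⇑ψ)) hstep hVsupp n,
        TransferAux.normSq_colPhi]
      rfl
  · -- decaying transfer solution ⇒ eigenfunction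
    rintro ⟨Ψ, hΨ0, h1, h2⟩
    have hstepZ : ∀ x : ℤ, Tstep L E k V x (TransferAux.PhiZ L E k V R Ψ x)
        = TransferAux.PhiZ L E k V R Ψ (x + 1) := TransferAux.PhiZ_step L E k V R hVsupp Ψ
    have eTV : TV L R E k V Ψ = TransferAux.PhiZ L E k V R Ψ ((R : ℤ) + 1) := by
      conv_lhs => rw [← TransferAux.PhiZ_neg_R L E k V R Ψ]
      exact TransferAux.TV_eq R _ hstepZ
    have eInv : ∀ n : ℕ, (Function.invFun (T0 L E k))^[n] Ψ
        = TransferAux.PhiZ L E k V R Ψ (-(R : ℤ) - n) := by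
      intro n
      rw [TransferAux.invFun_T0 L E k]
      conv_lhs => rw [← TransferAux.PhiZ_neg_R L E k V R Ψ]
      exact TransferAux.iter_T0inv R _ hstepZ hVsupp n
    have h1' : Summable fun n : ℕ => TransferAux.colSq L (TransferAux.fZ L E k V R Ψ) ((R:ℤ)+1+n)
        + TransferAux.colSq L (TransferAux.fZ L E k V R Ψ) ((R:ℤ)+n) := by
      refine h1.congr fun n => ?_
      rw [eTV, TransferAux.iter_T0 R _ hstepZ hVsupp n,
        TransferAux.normSq_PhiZ L E k V R hVsupp Ψ]
      have e1 : (R : ℤ) + 1 + n - 1 = (R : ℤ) + n := by ring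
      rw [e1]
    have h2' : Summable fun n : ℕ => TransferAux.colSq L (TransferAux.fZ L E k V R Ψ) (-(R:ℤ)-n)
        + TransferAux.colSq L (TransferAux.fZ L E k V R Ψ) (-(R:ℤ)-n-1) := by
      refine h2.congr fun n => ?_
      rw [eInv n, TransferAux.normSq_PhiZ L E k V R hVsupp Ψ]
    have hm2 : Memℓp (TransferAux.fZ L E k V R Ψ) 2 :=
      (TransferAux.memℓp_two_iff (L := L) _).mpr
        (TransferAux.summable_of_tails R _ h1' h2')
    refine ⟨⟨TransferAux.fZ L E k V R Ψ, hm2⟩, ?_, ?_⟩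
    · intro h0
      apply hΨ0
      have hz : TransferAux.fZ L E k V R Ψ = 0 := congrArg Subtype.val h0
      rw [← TransferAux.PhiZ_neg_R L E k V R Ψ]
      refine Prod.ext ?_ ?_
      · funext j
        exact congrFun hz (-(R : ℤ), j)
      · funext j
        rw [TransferAux.snd_eq (TransferAux.PhiZ L E k V R Ψ) hstepZ]
        exact congrFun hz (-(R : ℤ) - 1, j)
    · apply lp.ext
      funext p
      obtain ⟨x, j⟩ := p
      have hψcoe : ⇑(⟨TransferAux.fZ L E k V R Ψ, hm2⟩ :
          lp (fun _ : ℤ × ZMod L => ℂ) 2) = TransferAux.fZ L E k V R Ψ := rfl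
      rw [hHk k _ x j, lp.coeFn_smul, Pi.smul_apply, smul_eq_mul]
      simp only [hψcoe]
      have hc := congrFun (congrArg Prod.fst (hstepZ x)) j
      have hs := congrFun (TransferAux.snd_eq (TransferAux.PhiZ L E k V R Ψ) hstepZ x) j
      simp only [Tstep, deltaK] at hc
      rw [hs] at hc
      have hfZ : ∀ (a : ℤ) (b : ZMod L), TransferAux.fZ L E k V R Ψ (a, b)
          = (TransferAux.PhiZ L E k V R Ψ a).1 b := fun _ _ => rfl
      simp only [hfZ]
      linear_combination -hc

end
end

section
/- Let L be a positive integer and E, k ∈ ℝ. A complex number λ is an eigenvalue of T₀(E,k) (i.e., there is a nonzero v ∈ ℂ^{ℤ/Lℤ} × ℂ^{ℤ/Lℤ} with T₀(E,k) v = λ v) if and only if λ ≠ 0 and λ + λ⁻¹ = E − 2·cos(k + 2πj/L) for some integer j. -/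
open scoped BigOperators

noncomputable section

open Complex ZMod Finset

/-- The symbol of the twisted Laplacian at frequency `m`. -/
lemma symbol_eq {L : ℕ} [NeZero L] (k : ℝ) (j : ℤ) :
    Complex.exp (Complex.I * k) * stdAddChar ((j : ZMod L)) +
      Complex.exp (-(Complex.I * k)) * stdAddChar (-(j : ZMod L)) =
      ((2 * Real.cos (k + 2 * Real.pi * j / L) : ℝ) : ℂ) := by
  have h1 : stdAddChar ((j : ZMod L)) = Complex.exp (2 * Real.pi * Complex.I * j / L) :=
    ZMod.stdAddChar_coe j
  have h2 : stdAddChar (-(j : ZMod L)) = Complex.exp (2 * Real.pi * Complex.I * (-j : ℤ) / L) := by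
    rw [← Int.cast_neg, ZMod.stdAddChar_coe]
  rw [h1, h2, ← Complex.exp_add, ← Complex.exp_add]
  push_cast
  rw [Complex.two_cos]
  have hL : (L : ℂ) ≠ 0 := Nat.cast_ne_zero.mpr (NeZero.ne L)
  congr 1 <;> (congr 1; field_simp <;> ring)

/-- DFT diagonalizes the twisted Laplacian. -/
lemma dft_deltaK {L : ℕ} [NeZero L] (k : ℝ) (φ : ZMod L → ℂ) (m : ZMod L) :
    ZMod.dft (deltaK L k φ) m =
      (Complex.exp (Complex.I * k) * stdAddChar m +
        Complex.exp (-(Complex.I * k)) * stdAddChar (-m)) * ZMod.dft φ m := by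
  simp only [ZMod.dft_apply, deltaK, smul_eq_mul]
  have e1 : ∑ j : ZMod L, stdAddChar (-(j * m)) * φ (j + 1)
      = stdAddChar m * ∑ j : ZMod L, stdAddChar (-(j * m)) * φ j := by
    rw [Finset.mul_sum]
    refine Fintype.sum_equiv (Equiv.addRight (1 : ZMod L)) _ _ fun j => ?_
    simp only [Equiv.coe_addRight]
    rw [← mul_assoc, ← AddChar.map_add_eq_mul]
    ring_nf
  have e2 : ∑ j : ZMod L, stdAddChar (-(j * m)) * φ (j - 1)
      = stdAddChar (-m) * ∑ j : ZMod L, stdAddChar (-(j * m)) * φ j := by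
    rw [Finset.mul_sum]
    refine Fintype.sum_equiv (Equiv.subRight (1 : ZMod L)) _ _ fun j => ?_
    simp only [Equiv.subRight_apply]
    rw [← mul_assoc, ← AddChar.map_add_eq_mul]
    ring_nf
  calc ∑ j : ZMod L, stdAddChar (-(j * m)) *
        (Complex.exp (Complex.I * k) * φ (j + 1) + Complex.exp (-(Complex.I * k)) * φ (j - 1))
      = Complex.exp (Complex.I * k) * ∑ j : ZMod L, stdAddChar (-(j * m)) * φ (j + 1)
        + Complex.exp (-(Complex.I * k)) * ∑ j : ZMod L, stdAddChar (-(j * m)) * φ (j - 1) := by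
        rw [Finset.mul_sum, Finset.mul_sum, ← Finset.sum_add_distrib]
        exact Finset.sum_congr rfl fun j _ => by ring
    _ = _ := by rw [e1, e2]; ring

/-- Eigenvalues of the twisted Laplacian. -/
lemma deltaK_eigenvalues {L : ℕ} [NeZero L] (k : ℝ) (c : ℂ) :
    (∃ φ : ZMod L → ℂ, φ ≠ 0 ∧ deltaK L k φ = fun j => c * φ j) ↔
      ∃ j : ℤ, c = ((2 * Real.cos (k + 2 * Real.pi * j / L) : ℝ) : ℂ) := by
  constructor
  · rintro ⟨φ, hφ, heq⟩
    have hdft : ZMod.dft φ ≠ 0 := fun h => hφ (by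
      have := ZMod.dft (N := L) (E := ℂ) |>.injective (h.trans (map_zero _).symm)
      simpa using this)
    obtain ⟨m, hm⟩ := Function.ne_iff.mp hdft
    simp only [Pi.zero_apply] at hm
    refine ⟨(m.val : ℤ), ?_⟩
    have h1 : ZMod.dft (deltaK L k φ) m =
        (Complex.exp (Complex.I * k) * stdAddChar m +
          Complex.exp (-(Complex.I * k)) * stdAddChar (-m)) * ZMod.dft φ m :=
      dft_deltaK k φ m
    have h2 : ZMod.dft (deltaK L k φ) m = c * ZMod.dft φ m := by
      have : deltaK L k φ = c • φ := by funext j; simpa using congrFun heq j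
      rw [this, _root_.map_smul]; simp
    have hsym := symbol_eq (L := L) k (m.val : ℤ)
    rw [show ((m.val : ℤ) : ZMod L) = m by rw [Int.cast_natCast, ZMod.natCast_zmod_val]] at hsym
    have : c * ZMod.dft φ m =
        ((2 * Real.cos (k + 2 * Real.pi * (m.val : ℤ) / L) : ℝ) : ℂ) * ZMod.dft φ m := by
      rw [← h2, h1, hsym]
    exact mul_right_cancel₀ hm this
  · rintro ⟨j, hc⟩
    refine ⟨fun x => stdAddChar (x * (j : ZMod L)), ?_, ?_⟩
    · intro h
      have := congrFun h 0
      simp [AddChar.map_zero_eq_one] at this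
    · funext x
      simp only [deltaK]
      have h1 : stdAddChar ((x + 1) * (j : ZMod L))
          = stdAddChar ((j : ZMod L)) * stdAddChar (x * (j : ZMod L)) := by
        rw [show (x + 1) * (j : ZMod L) = (j : ZMod L) + x * (j : ZMod L) by ring,
          AddChar.map_add_eq_mul]
      have h2 : stdAddChar ((x - 1) * (j : ZMod L))
          = stdAddChar (-(j : ZMod L)) * stdAddChar (x * (j : ZMod L)) := by
        rw [show (x - 1) * (j : ZMod L) = -(j : ZMod L) + x * (j : ZMod L) by ring,
          AddChar.map_add_eq_mul]
      rw [h1, h2, hc, ← symbol_eq (L := L) k j]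
      ring

theorem eigenvalues_of_free_transfer_matrix
    (L : ℕ) [NeZero L] (E k : ℝ) (lam : ℂ) :
    (∃ v : (ZMod L → ℂ) × (ZMod L → ℂ), v ≠ 0 ∧ T0 L E k v = lam • v) ↔
      (lam ≠ 0 ∧ ∃ j : ℤ,
        lam + lam⁻¹ = ((E - 2 * Real.cos (k + 2 * Real.pi * j / L) : ℝ) : ℂ)) := by
  have key : (∃ v : (ZMod L → ℂ) × (ZMod L → ℂ), v ≠ 0 ∧ T0 L E k v = lam • v) ↔
      lam ≠ 0 ∧ ∃ φ : ZMod L → ℂ, φ ≠ 0 ∧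
        deltaK L k φ = fun j => ((E : ℂ) - (lam + lam⁻¹)) * φ j := by
    constructor
    · rintro ⟨v, hv, hT⟩
      have h1 : (fun j => (E : ℂ) * v.1 j - deltaK L k v.1 j - v.2 j) = lam • v.1 :=
        congrArg Prod.fst hT
      have h2 : v.1 = lam • v.2 := congrArg Prod.snd hT
      have hlam : lam ≠ 0 := by
        rintro rfl
        apply hv
        have hv1 : v.1 = 0 := by simpa using h2
        have hd : deltaK L k v.1 = 0 := by
          funext j; simp [deltaK, hv1]
        have hv2 : v.2 = 0 := by
          funext j
          have := congrFun h1 j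
          simp only [hv1, hd, deltaK, Pi.zero_apply, mul_zero, zero_sub, zero_smul,
            zero_add, neg_eq_zero, sub_zero, add_zero, smul_zero, Pi.smul_apply] at this
          simpa using this
        exact Prod.ext hv1 hv2
      refine ⟨hlam, v.1, ?_, ?_⟩
      · intro hv1
        apply hv
        have hv2 : v.2 = 0 := by
          have : lam • v.2 = 0 := hv1 ▸ h2.symm
          simpa [hlam] using smul_eq_zero.mp this
        exact Prod.ext hv1 hv2
      · funext j
        have hv2 : v.2 = lam⁻¹ • v.1 := by
          rw [h2, smul_smul, inv_mul_cancel₀ hlam, one_smul]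
        have := congrFun h1 j
        rw [hv2] at this
        simp only [Pi.smul_apply, smul_eq_mul] at this
        have : deltaK L k v.1 j = (E : ℂ) * v.1 j - lam⁻¹ * v.1 j - lam * v.1 j := by
          linear_combination -this
        rw [this]; ring
    · rintro ⟨hlam, φ, hφ, heq⟩
      refine ⟨(φ, lam⁻¹ • φ), fun h => hφ (congrArg Prod.fst h), Prod.ext ?_ ?_⟩
      · funext j
        simp only [T0, Prod.smul_fst, Pi.smul_apply, smul_eq_mul, congrFun heq j]
        field_simp
        ring
      · funext j
        simp only [T0, Prod.smul_snd, Pi.smul_apply, smul_eq_mul]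
        field_simp

  rw [key, deltaK_eigenvalues (L := L) k ((E : ℂ) - (lam + lam⁻¹))]
  constructor
  · rintro ⟨hlam, j, hj⟩
    refine ⟨hlam, j, ?_⟩
    push_cast at hj ⊢
    linear_combination -hj
  · rintro ⟨hlam, j, hj⟩
    refine ⟨hlam, j, ?_⟩
    push_cast at hj ⊢
    linear_combination -hj
end
end

section
/- Let L be a positive integer and E, k ∈ ℝ. A vector v ∈ ℂ^{ℤ/Lℤ} × ℂ^{ℤ/Lℤ} satisfies ∑_{n=0}^{∞} ‖T₀(E,k)ⁿ v‖² < ∞ if and only if v belongs to the ℂ-linear span of the set of vectors (μ·v_j, v_j), where j ranges over ℤ/Lℤ and μ ranges over the complex numbers with |μ| < 1 and μ² − (E − 2·cos(k + 2πj/L))·μ + 1 = 0, and where v_j ∈ ℂ^{ℤ/Lℤ} is the vector v_j(m) = e^{2πi·j·m/L}. -/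
open scoped BigOperators

noncomputable section

/-- The vector `v_j(m) = e^{2πi·j·m/L}` in `ℂ^{ℤ/Lℤ}`. -/
def fourierVec (L : ℕ) (j : ZMod L) : ZMod L → ℂ :=
  fun m => Complex.exp (2 * Real.pi * Complex.I * (j.val : ℂ) * (m.val : ℂ) / (L : ℂ))

namespace Aux
open Filter Topology
variable (L : ℕ) [NeZero L]
set_option linter.unusedSectionVars false

def zet (j : ZMod L) : ℂ := Complex.exp (((2 * Real.pi * j.val / L : ℝ) : ℂ) * Complex.I)

lemma fourierVec_apply (j m : ZMod L) : fourierVec L j m = zet L j ^ m.val := by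
  rw [zet, ← Complex.exp_nat_mul, fourierVec]
  congr 1
  push_cast
  ring

lemma zet_ne_zero (j : ZMod L) : zet L j ≠ 0 := Complex.exp_ne_zero _

lemma zet_pow_L (j : ZMod L) : zet L j ^ L = 1 := by
  rw [zet, ← Complex.exp_nat_mul]
  have hL : (L : ℂ) ≠ 0 := Nat.cast_ne_zero.mpr (NeZero.ne L)
  have : (L : ℂ) * (((2 * Real.pi * j.val / L : ℝ) : ℂ) * Complex.I) =
      (j.val : ℂ) * (2 * Real.pi * Complex.I) := by
    push_cast
    field_simp
  rw [this]
  exact_mod_cast Complex.exp_int_mul_two_pi_mul_I (j.val : ℤ)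

lemma norm_zet (j : ZMod L) : ‖zet L j‖ = 1 := Complex.norm_exp_ofReal_mul_I _

lemma conj_zet (j : ZMod L) : (starRingEnd ℂ) (zet L j) = (zet L j)⁻¹ := by
  rw [zet, ← Complex.exp_conj, ← Complex.exp_neg]
  rw [map_mul, Complex.conj_I, Complex.conj_ofReal]
  ring

lemma norm_fourierVec (j m : ZMod L) : ‖fourierVec L j m‖ = 1 := by
  rw [fourierVec_apply, norm_pow, norm_zet, one_pow]

lemma val_add_one (m : ZMod L) : (m + 1 : ZMod L).val = (m.val + 1) % L := by
  rw [ZMod.val_add, ZMod.val_one_eq_one_mod]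
  conv_rhs => rw [Nat.add_mod]
  rw [Nat.mod_eq_of_lt (ZMod.val_lt m)]

lemma fourierVec_add_one (j m : ZMod L) :
    fourierVec L j (m + 1) = zet L j * fourierVec L j m := by
  rw [fourierVec_apply, fourierVec_apply, val_add_one,
    ← pow_eq_pow_mod _ (zet_pow_L L j), pow_succ]
  ring

lemma fourierVec_sub_one (j m : ZMod L) :
    fourierVec L j (m - 1) = (zet L j)⁻¹ * fourierVec L j m := by
  have h := fourierVec_add_one L j (m - 1)
  rw [sub_add_cancel] at h
  rw [h]
  rw [inv_mul_cancel_left₀ (zet_ne_zero L j)]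

lemma sum_val_pow (ω : ℂ) : ∑ m : ZMod L, ω ^ (m : ZMod L).val = ∑ i ∈ Finset.range L, ω ^ i := by
  rw [Finset.sum_bij (fun (m : ZMod L) _ => m.val)]
  · intro a _; exact Finset.mem_range.mpr (ZMod.val_lt a)
  · intro a _ b _ h; exact ZMod.val_injective L h
  · intro b hb; exact ⟨(b : ZMod L), Finset.mem_univ _, ZMod.val_cast_of_lt (Finset.mem_range.mp hb)⟩
  · intro a _; rfl

lemma zet_mul_conj_zet (j j' : ZMod L) (h : j ≠ j') :
    zet L j * (starRingEnd ℂ) (zet L j') ≠ 1 := by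
  rw [zet, conj_zet, zet, ← Complex.exp_neg, ← Complex.exp_add]
  intro hc
  rw [Complex.exp_eq_one_iff] at hc
  obtain ⟨n, hn⟩ := hc
  have hL : (L : ℝ) ≠ 0 := Nat.cast_ne_zero.mpr (NeZero.ne L)
  have hR : (2 * Real.pi * j.val / L : ℝ) - (2 * Real.pi * j'.val / L : ℝ) = n * (2 * Real.pi) := by
    have : (((2 * Real.pi * j.val / L : ℝ) - (2 * Real.pi * j'.val / L : ℝ) : ℝ) : ℂ) =
        ((n * (2 * Real.pi) : ℝ) : ℂ) := by
      have hI : (Complex.I : ℂ) ≠ 0 := Complex.I_ne_zero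
      apply mul_right_cancel₀ hI
      push_cast
      push_cast at hn
      linear_combination hn
    exact_mod_cast this
  have h2π : (2 * Real.pi : ℝ) ≠ 0 := by positivity
  have hdiff : (j.val : ℝ) - (j'.val : ℝ) = n * L := by
    have h2 : (2 * Real.pi) * ((j.val : ℝ) - (j'.val : ℝ)) = (2 * Real.pi) * ((n : ℝ) * L) := by
      rw [div_sub_div_same, div_eq_iff hL] at hR
      linear_combination hR
    exact mul_left_cancel₀ h2π h2
  have hdZ : (j.val : ℤ) - (j'.val : ℤ) = n * L := by exact_mod_cast hdiff
  have h1 : (j.val : ℤ) < L := by exact_mod_cast ZMod.val_lt j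
  have h2 : (j'.val : ℤ) < L := by exact_mod_cast ZMod.val_lt j'
  have h3 : (0:ℤ) ≤ (j.val : ℤ) := Int.natCast_nonneg _
  have h4 : (0:ℤ) ≤ (j'.val : ℤ) := Int.natCast_nonneg _
  have hLpos : (0:ℤ) < L := by exact_mod_cast Nat.pos_of_ne_zero (NeZero.ne L)
  rcases lt_trichotomy n 0 with hn0 | hn0 | hn0
  · have hle : n ≤ -1 := by omega
    have : n * L ≤ (-1) * L := mul_le_mul_of_nonneg_right hle (le_of_lt hLpos)
    linarith
  · subst hn0
    apply h
    apply ZMod.val_injective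
    have : (j.val : ℤ) = (j'.val : ℤ) := by linarith
    exact_mod_cast this
  · have hle : (1:ℤ) ≤ n := hn0
    have : (1:ℤ) * L ≤ n * L := mul_le_mul_of_nonneg_right hle (le_of_lt hLpos)
    linarith

lemma orth (j j' : ZMod L) :
    ∑ m : ZMod L, fourierVec L j m * (starRingEnd ℂ) (fourierVec L j' m) =
      if j = j' then (L : ℂ) else 0 := by
  have hterm : ∀ m : ZMod L, fourierVec L j m * (starRingEnd ℂ) (fourierVec L j' m) =
      (zet L j * (starRingEnd ℂ) (zet L j')) ^ m.val := by
    intro m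
    rw [fourierVec_apply, fourierVec_apply, map_pow, mul_pow]
  simp_rw [hterm]
  rw [sum_val_pow]
  by_cases h : j = j'
  · subst h
    have : zet L j * (starRingEnd ℂ) (zet L j) = 1 := by
      rw [conj_zet, mul_inv_cancel₀ (zet_ne_zero L j)]
    simp [this, if_pos rfl]
  · rw [if_neg h]
    set ω := zet L j * (starRingEnd ℂ) (zet L j') with hω
    have hω1 : ω ≠ 1 := zet_mul_conj_zet L j j' h
    have hωL : ω ^ L = 1 := by
      rw [hω, mul_pow, ← map_pow, zet_pow_L, zet_pow_L, map_one, mul_one]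
    rw [geom_sum_eq hω1, hωL, sub_self, zero_div]

lemma fourierVec_symm (j m : ZMod L) : fourierVec L j m = fourierVec L m j := by
  unfold fourierVec
  congr 1
  ring

/-- angle -/
def th (k : ℝ) (j : ZMod L) : ℝ := k + 2 * Real.pi * (j.val : ℝ) / L

lemma exp_I_mul_k_zet (k : ℝ) (j : ZMod L) :
    Complex.exp (Complex.I * k) * zet L j + Complex.exp (-(Complex.I * k)) * (zet L j)⁻¹ =
    ((2 * Real.cos (th L k j) : ℝ) : ℂ) := by
  rw [zet, ← Complex.exp_neg, ← Complex.exp_add, ← Complex.exp_add]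
  have e1 : Complex.I * k + ((2 * Real.pi * j.val / L : ℝ) : ℂ) * Complex.I =
      ((th L k j : ℝ) : ℂ) * Complex.I := by
    rw [th]; push_cast; ring
  have e2 : -(Complex.I * k) + -(((2 * Real.pi * j.val / L : ℝ) : ℂ) * Complex.I) =
      -(((th L k j : ℝ) : ℂ) * Complex.I) := by
    rw [th]; push_cast; ring
  rw [e1, e2]
  have hc : Complex.exp (((th L k j : ℝ) : ℂ) * Complex.I) +
      Complex.exp (-(((th L k j : ℝ) : ℂ) * Complex.I)) = 2 * Complex.cos ((th L k j : ℝ) : ℂ) := by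
    rw [Complex.cos]; ring_nf
  rw [hc, ← Complex.ofReal_cos]
  push_cast
  ring

lemma deltaK_fourierVec (k : ℝ) (j : ZMod L) (m : ZMod L) :
    deltaK L k (fourierVec L j) m = ((2 * Real.cos (th L k j) : ℝ) : ℂ) * fourierVec L j m := by
  rw [deltaK]
  rw [fourierVec_add_one, fourierVec_sub_one, ← exp_I_mul_k_zet L k j]
  ring

/-- Fourier coefficient -/
def coef (φ : ZMod L → ℂ) (j : ZMod L) : ℂ :=
  (∑ m : ZMod L, (starRingEnd ℂ) (fourierVec L j m) * φ m) / L

lemma inversion (φ : ZMod L → ℂ) (m : ZMod L) :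
    φ m = ∑ j : ZMod L, coef L φ j * fourierVec L j m := by
  have hL : (L : ℂ) ≠ 0 := Nat.cast_ne_zero.mpr (NeZero.ne L)
  unfold coef
  rw [Finset.sum_congr rfl (fun j _ => by rw [div_mul_eq_mul_div, Finset.sum_mul])]
  rw [← Finset.sum_div]
  rw [Finset.sum_comm]
  have : ∀ m' : ZMod L, ∑ j : ZMod L, (starRingEnd ℂ) (fourierVec L j m') * φ m' * fourierVec L j m
      = φ m' * ∑ j : ZMod L, fourierVec L m j * (starRingEnd ℂ) (fourierVec L m' j) := by
    intro m'
    rw [Finset.mul_sum]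
    apply Finset.sum_congr rfl
    intro j _
    rw [fourierVec_symm L j m, fourierVec_symm L j m']
    ring
  rw [Finset.sum_congr rfl (fun m' _ => this m')]
  simp_rw [orth]
  simp [Finset.sum_ite_eq, hL]

lemma bessel (φ : ZMod L → ℂ) (j : ZMod L) :
    ‖coef L φ j‖ ^ 2 ≤ (∑ m : ZMod L, ‖φ m‖ ^ 2) / L := by
  have hL0 : (0:ℝ) < L := Nat.cast_pos.mpr (Nat.pos_of_ne_zero (NeZero.ne L))
  have h1 : ‖∑ m : ZMod L, (starRingEnd ℂ) (fourierVec L j m) * φ m‖ ≤ ∑ m : ZMod L, ‖φ m‖ := by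
    refine (norm_sum_le _ _).trans ?_
    apply Finset.sum_le_sum
    intro m _
    rw [norm_mul, RCLike.norm_conj, norm_fourierVec, one_mul]
  have h2 : (∑ m : ZMod L, ‖φ m‖) ^ 2 ≤ (L : ℝ) * ∑ m : ZMod L, ‖φ m‖ ^ 2 := by
    have := sq_sum_le_card_mul_sum_sq (s := (Finset.univ : Finset (ZMod L))) (f := fun m => ‖φ m‖)
    simpa using this
  rw [coef, norm_div]
  have hnL : ‖(L:ℂ)‖ = (L:ℝ) := by simp
  rw [hnL, div_pow]
  rw [div_le_div_iff₀ (by positivity) hL0]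
  have h3 : ‖∑ m : ZMod L, (starRingEnd ℂ) (fourierVec L j m) * φ m‖ ^ 2 ≤ (∑ m : ZMod L, ‖φ m‖)^2 := by
    apply pow_le_pow_left₀ (norm_nonneg _) h1
  nlinarith [h3, h2, Finset.sum_nonneg (fun m (_ : m ∈ Finset.univ) => sq_nonneg ‖φ m‖)]

lemma conj_fourierVec_add_one (j m : ZMod L) :
    (starRingEnd ℂ) (fourierVec L j (m + 1)) = (zet L j)⁻¹ * (starRingEnd ℂ) (fourierVec L j m) := by
  rw [fourierVec_add_one, map_mul, conj_zet]

lemma conj_fourierVec_sub_one (j m : ZMod L) :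
    (starRingEnd ℂ) (fourierVec L j (m - 1)) = zet L j * (starRingEnd ℂ) (fourierVec L j m) := by
  rw [fourierVec_sub_one, map_mul, map_inv₀, conj_zet, inv_inv]

lemma coef_deltaK (k : ℝ) (φ : ZMod L → ℂ) (j : ZMod L) :
    coef L (deltaK L k φ) j = ((2 * Real.cos (th L k j) : ℝ) : ℂ) * coef L φ j := by
  have hs1 : ∑ m : ZMod L, (starRingEnd ℂ) (fourierVec L j m) * φ (m + 1) =
      zet L j * ∑ m : ZMod L, (starRingEnd ℂ) (fourierVec L j m) * φ m := by
    rw [Fintype.sum_equiv (Equiv.addRight (1 : ZMod L))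
      (fun m => (starRingEnd ℂ) (fourierVec L j m) * φ (m + 1))
      (fun m => (starRingEnd ℂ) (fourierVec L j (m - 1)) * φ m)
      (fun x => by simp)]
    simp_rw [conj_fourierVec_sub_one, mul_assoc]
    rw [← Finset.mul_sum]
  have hs2 : ∑ m : ZMod L, (starRingEnd ℂ) (fourierVec L j m) * φ (m - 1) =
      (zet L j)⁻¹ * ∑ m : ZMod L, (starRingEnd ℂ) (fourierVec L j m) * φ m := by
    rw [Fintype.sum_equiv (Equiv.subRight (1 : ZMod L))
      (fun m => (starRingEnd ℂ) (fourierVec L j m) * φ (m - 1))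
      (fun m => (starRingEnd ℂ) (fourierVec L j (m + 1)) * φ m)
      (fun x => by simp)]
    simp_rw [conj_fourierVec_add_one, mul_assoc]
    rw [← Finset.mul_sum]
  have key : ∑ m : ZMod L, (starRingEnd ℂ) (fourierVec L j m) * deltaK L k φ m
      = ((2 * Real.cos (th L k j) : ℝ) : ℂ) * ∑ m : ZMod L, (starRingEnd ℂ) (fourierVec L j m) * φ m := by
    have expand : ∀ m : ZMod L, (starRingEnd ℂ) (fourierVec L j m) * deltaK L k φ m =
        Complex.exp (Complex.I * k) * ((starRingEnd ℂ) (fourierVec L j m) * φ (m + 1)) +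
        Complex.exp (-(Complex.I * k)) * ((starRingEnd ℂ) (fourierVec L j m) * φ (m - 1)) := by
      intro m
      rw [deltaK]
      ring
    simp_rw [expand]
    rw [Finset.sum_add_distrib, ← Finset.mul_sum, ← Finset.mul_sum, hs1, hs2,
      ← exp_I_mul_k_zet L k j]
    ring
  unfold coef
  rw [key, mul_div_assoc]


lemma coef_T0_fst (E k : ℝ) (Ψ : (ZMod L → ℂ) × (ZMod L → ℂ)) (j : ZMod L) :
    coef L ((T0 L E k Ψ).1) j =
      ((E - 2 * Real.cos (th L k j) : ℝ) : ℂ) * coef L Ψ.1 j - coef L Ψ.2 j := by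
  have h1 : coef L ((T0 L E k Ψ).1) j =
      (∑ m : ZMod L, ((E:ℂ) * ((starRingEnd ℂ) (fourierVec L j m) * Ψ.1 m)
        - (starRingEnd ℂ) (fourierVec L j m) * deltaK L k Ψ.1 m
        - (starRingEnd ℂ) (fourierVec L j m) * Ψ.2 m)) / L := by
    unfold coef T0
    congr 1
    apply Finset.sum_congr rfl
    intro m _
    ring
  rw [h1, Finset.sum_sub_distrib, Finset.sum_sub_distrib, ← Finset.mul_sum, sub_div, sub_div,
    mul_div_assoc]
  have h2 : (∑ m : ZMod L, (starRingEnd ℂ) (fourierVec L j m) * deltaK L k Ψ.1 m) / L =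
      coef L (deltaK L k Ψ.1) j := rfl
  rw [h2, coef_deltaK]
  have h3 : (∑ m : ZMod L, (starRingEnd ℂ) (fourierVec L j m) * Ψ.1 m) / L = coef L Ψ.1 j := rfl
  have h4 : (∑ m : ZMod L, (starRingEnd ℂ) (fourierVec L j m) * Ψ.2 m) / L = coef L Ψ.2 j := rfl
  rw [h3, h4]
  push_cast
  ring

lemma coef_T0_snd (E k : ℝ) (Ψ : (ZMod L → ℂ) × (ZMod L → ℂ)) (j : ZMod L) :
    coef L ((T0 L E k Ψ).2) j = coef L Ψ.1 j := rfl

lemma T0_add (E k : ℝ) (x y : (ZMod L → ℂ) × (ZMod L → ℂ)) :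
    T0 L E k (x + y) = T0 L E k x + T0 L E k y := by
  refine Prod.ext ?_ rfl
  funext m
  show (E:ℂ) * (x.1 + y.1) m - deltaK L k (x.1 + y.1) m - (x.2 + y.2) m = _
  simp only [Pi.add_apply, deltaK, Prod.fst_add, Prod.snd_add]
  show _ = ((E:ℂ) * x.1 m - deltaK L k x.1 m - x.2 m) + ((E:ℂ) * y.1 m - deltaK L k y.1 m - y.2 m)
  simp only [deltaK, Pi.add_apply]
  ring

lemma T0_smul (E k : ℝ) (c : ℂ) (x : (ZMod L → ℂ) × (ZMod L → ℂ)) :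
    T0 L E k (c • x) = c • T0 L E k x := by
  refine Prod.ext ?_ rfl
  funext m
  show (E:ℂ) * (c • x.1) m - deltaK L k (c • x.1) m - (c • x.2) m = (c • (T0 L E k x).1) m
  simp only [Pi.smul_apply, smul_eq_mul, deltaK, T0]
  ring

lemma T0_iter_add (E k : ℝ) (n : ℕ) (x y : (ZMod L → ℂ) × (ZMod L → ℂ)) :
    (T0 L E k)^[n] (x + y) = (T0 L E k)^[n] x + (T0 L E k)^[n] y := by
  induction n with
  | zero => simp
  | succ n ih => rw [Function.iterate_succ_apply', Function.iterate_succ_apply',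
      Function.iterate_succ_apply', ih, T0_add]

lemma T0_iter_smul (E k : ℝ) (n : ℕ) (c : ℂ) (x : (ZMod L → ℂ) × (ZMod L → ℂ)) :
    (T0 L E k)^[n] (c • x) = c • (T0 L E k)^[n] x := by
  induction n with
  | zero => simp
  | succ n ih => rw [Function.iterate_succ_apply', Function.iterate_succ_apply', ih, T0_smul]

lemma normSq_nonneg (Ψ : (ZMod L → ℂ) × (ZMod L → ℂ)) : 0 ≤ normSq L Ψ := by
  unfold normSq
  positivity

lemma normSq_smul (c : ℂ) (x : (ZMod L → ℂ) × (ZMod L → ℂ)) :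
    normSq L (c • x) = ‖c‖ ^ 2 * normSq L x := by
  unfold normSq
  simp only [Prod.smul_fst, Prod.smul_snd, Pi.smul_apply, smul_eq_mul, norm_mul, mul_pow]
  rw [← Finset.mul_sum, ← Finset.mul_sum, mul_add]

lemma normSq_add_le (x y : (ZMod L → ℂ) × (ZMod L → ℂ)) :
    normSq L (x + y) ≤ 2 * (normSq L x + normSq L y) := by
  unfold normSq
  have key : ∀ (f g : ZMod L → ℂ), ∑ m : ZMod L, ‖(f + g) m‖ ^ 2 ≤
      2 * (∑ m : ZMod L, ‖f m‖ ^ 2) + 2 * ∑ m : ZMod L, ‖g m‖ ^ 2 := by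
    intro f g
    rw [Finset.mul_sum, Finset.mul_sum, ← Finset.sum_add_distrib]
    apply Finset.sum_le_sum
    intro m _
    have h := norm_add_le (f m) (g m)
    have h2 : ‖(f + g) m‖ ^ 2 ≤ (‖f m‖ + ‖g m‖) ^ 2 := by
      apply pow_le_pow_left₀ (norm_nonneg _) _ 2
      simpa using h
    nlinarith [sq_nonneg (‖f m‖ - ‖g m‖)]
  have k1 := key x.1 y.1
  have k2 := key x.2 y.2
  have e1 : (x + y).1 = x.1 + y.1 := rfl
  have e2 : (x + y).2 = x.2 + y.2 := rfl
  rw [e1, e2]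
  linarith

lemma snd_sq_le_normSq (Ψ : (ZMod L → ℂ) × (ZMod L → ℂ)) :
    ∑ m : ZMod L, ‖Ψ.2 m‖ ^ 2 ≤ normSq L Ψ := by
  unfold normSq
  have : (0:ℝ) ≤ ∑ m : ZMod L, ‖Ψ.1 m‖ ^ 2 := by positivity
  linarith

lemma decay_aux (c d μ ν : ℂ) (hν : 1 ≤ ‖ν‖) (hne : μ ≠ ν)
    (h : Tendsto (fun n : ℕ => c * μ ^ n + d * ν ^ n) atTop (𝓝 0)) : d = 0 := by
  have hshift : Tendsto (fun n : ℕ => c * μ ^ (n + 1) + d * ν ^ (n + 1)) atTop (𝓝 0) := by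
    exact h.comp (tendsto_add_atTop_nat 1)
  have hq : Tendsto (fun n : ℕ => (c * μ ^ (n + 1) + d * ν ^ (n + 1))
      - μ * (c * μ ^ n + d * ν ^ n)) atTop (𝓝 0) := by
    have := hshift.sub ((h.const_mul μ))
    simpa using this
  have hq2 : ∀ n : ℕ, (c * μ ^ (n + 1) + d * ν ^ (n + 1)) - μ * (c * μ ^ n + d * ν ^ n)
      = d * (ν - μ) * ν ^ n := by
    intro n
    ring
  rw [show (fun n : ℕ => (c * μ ^ (n + 1) + d * ν ^ (n + 1)) - μ * (c * μ ^ n + d * ν ^ n)) =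
      fun n : ℕ => d * (ν - μ) * ν ^ n from funext hq2] at hq
  have hnorm : Tendsto (fun n : ℕ => ‖d * (ν - μ) * ν ^ n‖) atTop (𝓝 0) := by
    simpa using hq.norm
  have hge : ∀ n : ℕ, ‖d * (ν - μ)‖ ≤ ‖d * (ν - μ) * ν ^ n‖ := by
    intro n
    calc ‖d * (ν - μ)‖ = ‖d * (ν - μ)‖ * 1 := (mul_one _).symm
      _ ≤ ‖d * (ν - μ)‖ * ‖ν‖ ^ n :=
          mul_le_mul_of_nonneg_left (one_le_pow₀ hν) (norm_nonneg _)
      _ = ‖d * (ν - μ) * ν ^ n‖ := by rw [norm_mul (d * (ν - μ)) (ν ^ n), norm_pow]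
  have : ‖d * (ν - μ)‖ ≤ 0 := ge_of_tendsto' hnorm hge
  have h0 : d * (ν - μ) = 0 := by
    have := norm_nonneg (d * (ν - μ))
    have : ‖d * (ν - μ)‖ = 0 := le_antisymm ‹_› ‹_›
    exact norm_eq_zero.mp this
  rcases mul_eq_zero.mp h0 with h | h
  · exact h
  · exact absurd (sub_eq_zero.mp h).symm hne

lemma key2 (a α β : ℂ) (p : ℕ → ℂ) (hp0 : p 0 = β) (hp1 : p 1 = α)
    (hrec : ∀ n, p (n + 2) = a * p (n + 1) - p n)
    (hsum : Summable fun n => ‖p n‖ ^ 2) :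
    (α = 0 ∧ β = 0) ∨ ∃ μ : ℂ, ‖μ‖ < 1 ∧ μ ^ 2 - a * μ + 1 = 0 ∧ α = μ * β := by
  -- p tends to zero
  have hsq : Tendsto (fun n => ‖p n‖ ^ 2) atTop (𝓝 0) := hsum.tendsto_atTop_zero
  have hpn : Tendsto p atTop (𝓝 0) := by
    rw [tendsto_zero_iff_norm_tendsto_zero]
    have hs : Tendsto (fun n => Real.sqrt (‖p n‖ ^ 2)) atTop (𝓝 (Real.sqrt 0)) :=
      (Real.continuous_sqrt.tendsto 0).comp hsq
    simpa [Real.sqrt_sq (norm_nonneg _)] using hs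
  obtain ⟨μ, ν, hsumr, hprod⟩ : ∃ μ ν : ℂ, μ + ν = a ∧ μ * ν = 1 := by
    obtain ⟨dd, hdd⟩ : ∃ dd : ℂ, dd ^ 2 = a ^ 2 - 4 :=
      IsAlgClosed.exists_pow_nat_eq (a ^ 2 - 4) two_pos
    refine ⟨(a + dd) / 2, (a - dd) / 2, by ring, ?_⟩
    field_simp
    linear_combination -hdd
  have rootμ : μ ^ 2 - a * μ + 1 = 0 := by linear_combination μ * hsumr - hprod
  have rootν : ν ^ 2 - a * ν + 1 = 0 := by linear_combination ν * hsumr - hprod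
  have hμ0 : μ ≠ 0 := by
    intro h0
    rw [h0, zero_mul] at hprod
    exact one_ne_zero hprod.symm
  have hν0 : ν ≠ 0 := by
    intro h0
    rw [h0, mul_zero] at hprod
    exact one_ne_zero hprod.symm
  have hnormprod : ‖μ‖ * ‖ν‖ = 1 := by rw [← norm_mul, hprod, norm_one]
  by_cases hμν : μ = ν
  · -- repeated root, |μ| = 1
    left
    have hμ2 : μ ^ 2 = 1 := by rw [← hprod, ← hμν]; ring
    have hnμ : ‖μ‖ = 1 := by
      have h1 : ‖μ‖ ^ 2 = 1 := by rw [← norm_pow, hμ2, norm_one]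
      have h2 : (‖μ‖ - 1) * (‖μ‖ + 1) = 0 := by nlinarith
      rcases mul_eq_zero.mp h2 with h | h
      · linarith [sub_eq_zero.mp h]
      · nlinarith [norm_nonneg μ]
    have ha : a = 2 * μ := by rw [← hsumr, ← hμν]; ring
    set e := μ * α - β with he
    have hform : ∀ n : ℕ, p n = μ ^ n * (β + n * e) := by
      intro n
      induction n using Nat.twoStepInduction with
      | zero => simp [hp0]
      | one =>
        rw [hp1, he]
        push_cast
        linear_combination -α * hμ2
      | more n ih1 ih2 =>
        rw [hrec, ih1, ih2, ha]
        push_cast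
        linear_combination (μ ^ n * (β + n * e)) * hμ2
    -- g n := β + n e tends to 0
    have hg : Tendsto (fun n : ℕ => β + n * e) atTop (𝓝 0) := by
      rw [tendsto_zero_iff_norm_tendsto_zero]
      have : ∀ n : ℕ, ‖β + (n:ℂ) * e‖ = ‖p n‖ := by
        intro n
        rw [hform n, norm_mul, norm_pow, hnμ, one_pow, one_mul]
      rw [show (fun n : ℕ => ‖β + (n:ℂ) * e‖) = fun n => ‖p n‖ from funext this]
      exact (tendsto_zero_iff_norm_tendsto_zero.mp hpn)
    have hgs : Tendsto (fun n : ℕ => β + ((n:ℂ) + 1) * e) atTop (𝓝 0) := by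
      have h' := hg.comp (tendsto_add_atTop_nat 1)
      refine h'.congr fun n => ?_
      simp only [Function.comp_apply]
      push_cast
      ring
    have he0 : e = 0 := by
      have hdiff : Tendsto (fun n : ℕ => (β + ((n:ℂ) + 1) * e) - (β + (n:ℂ) * e)) atTop (𝓝 0) := by
        simpa using hgs.sub hg
      have : (fun n : ℕ => (β + ((n:ℂ) + 1) * e) - (β + (n:ℂ) * e)) = fun _ => e := by
        funext n
        ring
      rw [this] at hdiff
      exact tendsto_nhds_unique tendsto_const_nhds hdiff
    have hβ0 : β = 0 := by
      have hg' : Tendsto (fun _ : ℕ => β) atTop (𝓝 0) :=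
        hg.congr fun n => by rw [he0, mul_zero, add_zero]
      exact tendsto_nhds_unique tendsto_const_nhds hg'
    have hα0 : α = 0 := by
      have := hp1
      rw [hform 1, hβ0, he0] at this
      simpa using this.symm
    exact ⟨hα0, hβ0⟩
  · -- distinct roots
    have hsub : μ - ν ≠ 0 := sub_ne_zero.mpr hμν
    obtain ⟨c, d, hcd0, hcd1⟩ : ∃ c d : ℂ, c + d = β ∧ c * μ + d * ν = α :=
      ⟨(α - ν * β) / (μ - ν), (μ * β - α) / (μ - ν),
        by field_simp; ring, by field_simp; ring⟩
    have hform : ∀ n : ℕ, p n = c * μ ^ n + d * ν ^ n := by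
      intro n
      induction n using Nat.twoStepInduction with
      | zero =>
        rw [hp0, ← hcd0]
        ring
      | one =>
        rw [hp1, ← hcd1]
        ring
      | more n ih1 ih2 =>
        rw [hrec, ih1, ih2]
        linear_combination (-(c * μ ^ n)) * rootμ - (d * ν ^ n) * rootν
    have hten : Tendsto (fun n : ℕ => c * μ ^ n + d * ν ^ n) atTop (𝓝 0) := by
      rw [show (fun n : ℕ => c * μ ^ n + d * ν ^ n) = p from funext fun n => (hform n).symm]
      exact hpn
    have htenswap : Tendsto (fun n : ℕ => d * ν ^ n + c * μ ^ n) atTop (𝓝 0) := by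
      refine hten.congr (fun n => by ring)
    rcases lt_or_ge ‖μ‖ 1 with hμ1 | hμ1
    · -- ‖μ‖ < 1, so ‖ν‖ ≥ 1
      have hν1 : 1 ≤ ‖ν‖ := by
        by_contra hlt
        push_neg at hlt
        nlinarith [norm_nonneg μ, norm_nonneg ν]
      have hd0 : d = 0 := decay_aux c d μ ν hν1 hμν hten
      right
      refine ⟨μ, hμ1, rootμ, ?_⟩
      have hα : α = c * μ := by rw [← hp1, hform 1, hd0]; ring
      have hβ : β = c := by rw [← hp0, hform 0, hd0]; ring
      rw [hα, hβ]
      ring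
    · rcases lt_or_ge ‖ν‖ 1 with hν1 | hν1
      · -- ‖ν‖ < 1, ‖μ‖ ≥ 1
        have hc0 : c = 0 := decay_aux d c ν μ hμ1 (Ne.symm hμν) htenswap
        right
        refine ⟨ν, hν1, rootν, ?_⟩
        have hα : α = d * ν := by rw [← hp1, hform 1, hc0]; ring
        have hβ : β = d := by rw [← hp0, hform 0, hc0]; ring
        rw [hα, hβ]
        ring
      · -- both ≥ 1: c = d = 0
        left
        have hd0 : d = 0 := decay_aux c d μ ν hν1 hμν hten
        have hc0 : c = 0 := decay_aux d c ν μ hμ1 (Ne.symm hμν) htenswap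
        constructor
        · rw [← hp1, hform 1, hc0, hd0]; ring
        · rw [← hp0, hform 0, hc0, hd0]; ring

lemma T0_eigen (E k : ℝ) (j : ZMod L) (μ : ℂ)
    (hroot : μ ^ 2 - ((E - 2 * Real.cos (th L k j) : ℝ) : ℂ) * μ + 1 = 0) :
    T0 L E k (μ • fourierVec L j, fourierVec L j) = μ • (μ • fourierVec L j, fourierVec L j) := by
  refine Prod.ext ?_ rfl
  funext m
  show (E : ℂ) * (μ • fourierVec L j) m - deltaK L k (μ • fourierVec L j) m - fourierVec L j m
      = (μ • μ • fourierVec L j) m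
  have hδ : deltaK L k (μ • fourierVec L j) m = μ * deltaK L k (fourierVec L j) m := by
    simp only [deltaK, Pi.smul_apply, smul_eq_mul]
    ring
  rw [hδ, deltaK_fourierVec]
  simp only [Pi.smul_apply, smul_eq_mul]
  push_cast at hroot ⊢
  linear_combination (-(fourierVec L j m)) * hroot

lemma T0_zero (E k : ℝ) : T0 L E k 0 = 0 := by
  refine Prod.ext ?_ rfl
  funext m
  show (E : ℂ) * (0 : ZMod L → ℂ) m - deltaK L k (0 : ZMod L → ℂ) m - (0 : ZMod L → ℂ) m = _
  simp [deltaK]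

theorem main (E k : ℝ) (v : (ZMod L → ℂ) × (ZMod L → ℂ)) :
    Summable (fun n : ℕ => normSq L ((T0 L E k)^[n] v)) ↔
      v ∈ Submodule.span ℂ
        {w : (ZMod L → ℂ) × (ZMod L → ℂ) | ∃ (j : ZMod L) (μ : ℂ),
          ‖μ‖ < 1 ∧
          μ ^ 2 - ((E - 2 * Real.cos (k + 2 * Real.pi * (j.val : ℝ) / L) : ℝ) : ℂ) * μ + 1 = 0 ∧
          w = (μ • fourierVec L j, fourierVec L j)} := by
  have hL0 : (0:ℝ) < L := Nat.cast_pos.mpr (Nat.pos_of_ne_zero (NeZero.ne L))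
  constructor
  · -- forward
    intro hsum
    have hj : ∀ j : ZMod L, (coef L v.1 j = 0 ∧ coef L v.2 j = 0) ∨
        ∃ μ : ℂ, ‖μ‖ < 1 ∧ μ ^ 2 - ((E - 2 * Real.cos (th L k j) : ℝ) : ℂ) * μ + 1 = 0 ∧
          coef L v.1 j = μ * coef L v.2 j := by
      intro j
      set p : ℕ → ℂ := fun n => coef L ((T0 L E k)^[n] v).2 j with hp
      have e1 : ∀ n : ℕ, p (n + 1) = coef L ((T0 L E k)^[n] v).1 j := by
        intro n
        show coef L ((T0 L E k)^[n+1] v).2 j = _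
        rw [Function.iterate_succ_apply']
        exact coef_T0_snd L E k _ j
      have hrec : ∀ n, p (n + 2) = ((E - 2 * Real.cos (th L k j) : ℝ) : ℂ) * p (n + 1) - p n := by
        intro n
        rw [e1 (n + 1), Function.iterate_succ_apply', coef_T0_fst L E k _ j, ← e1 n]
      have hsump : Summable fun n => ‖p n‖ ^ 2 := by
        apply Summable.of_nonneg_of_le (fun n => sq_nonneg _)
          (fun n => ?_) (hsum.div_const L)
        calc ‖p n‖ ^ 2 ≤ (∑ m : ZMod L, ‖((T0 L E k)^[n] v).2 m‖ ^ 2) / L := bessel L _ j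
          _ ≤ normSq L ((T0 L E k)^[n] v) / L := by
              gcongr
              exact snd_sq_le_normSq L _
      exact key2 _ _ _ p rfl (e1 0) hrec hsump
    have vsum : v = ∑ j : ZMod L,
        (coef L v.1 j • fourierVec L j, coef L v.2 j • fourierVec L j) := by
      refine Prod.ext ?_ ?_
      · rw [Prod.fst_sum]
        funext m
        rw [Finset.sum_apply]
        simp only [Pi.smul_apply, smul_eq_mul]
        exact inversion L v.1 m
      · rw [Prod.snd_sum]
        funext m
        rw [Finset.sum_apply]
        simp only [Pi.smul_apply, smul_eq_mul]
        exact inversion L v.2 m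
    rw [vsum]
    apply Submodule.sum_mem
    intro j _
    rcases hj j with ⟨h1, h2⟩ | ⟨μ, hμ1, hroot, hEq⟩
    · rw [h1, h2]
      simp only [zero_smul]
      exact Submodule.zero_mem _
    · have : (coef L v.1 j • fourierVec L j, coef L v.2 j • fourierVec L j) =
          coef L v.2 j • (μ • fourierVec L j, fourierVec L j) := by
        rw [hEq]
        refine Prod.ext ?_ rfl
        show (μ * coef L v.2 j) • fourierVec L j = coef L v.2 j • μ • fourierVec L j
        rw [smul_smul, mul_comm]
      rw [this]
      exact Submodule.smul_mem _ _ (Submodule.subset_span ⟨j, μ, hμ1, hroot, rfl⟩)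
  · -- backward
    intro hv
    induction hv using Submodule.span_induction with
    | mem x hx =>
      obtain ⟨j, μ, hμ1, hroot, rfl⟩ := hx
      have heig : ∀ n : ℕ, (T0 L E k)^[n] (μ • fourierVec L j, fourierVec L j) =
          μ ^ n • (μ • fourierVec L j, fourierVec L j) := by
        intro n
        induction n with
        | zero => simp
        | succ n ih =>
          rw [Function.iterate_succ_apply', ih, T0_smul, T0_eigen L E k j μ hroot,
            smul_smul, ← pow_succ]
      have hns : ∀ n : ℕ, normSq L ((T0 L E k)^[n] (μ • fourierVec L j, fourierVec L j)) =
          (‖μ‖ ^ 2) ^ n * normSq L (μ • fourierVec L j, fourierVec L j) := by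
        intro n
        rw [heig n, normSq_smul, norm_pow, ← pow_mul, ← pow_mul, mul_comm 2 n]
      rw [show (fun n : ℕ => normSq L ((T0 L E k)^[n] (μ • fourierVec L j, fourierVec L j)))
          = fun n => (‖μ‖ ^ 2) ^ n * normSq L (μ • fourierVec L j, fourierVec L j)
          from funext hns]
      apply Summable.mul_right
      exact summable_geometric_of_lt_one (sq_nonneg _) (by nlinarith [norm_nonneg μ])
    | zero =>
      have : ∀ n : ℕ, (T0 L E k)^[n] (0 : (ZMod L → ℂ) × (ZMod L → ℂ)) = 0 := by
        intro n
        induction n with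
        | zero => rfl
        | succ n ih => rw [Function.iterate_succ_apply', ih, T0_zero]
      simp only [this]
      simpa [normSq] using summable_zero
    | add x y hx hy hsx hsy =>
      apply Summable.of_nonneg_of_le (fun n => normSq_nonneg L _)
        (fun n => ?_) (((hsx.add hsy).mul_left 2))
      rw [T0_iter_add]
      exact normSq_add_le L _ _
    | smul c x hx hsx =>
      have : ∀ n : ℕ, normSq L ((T0 L E k)^[n] (c • x)) = ‖c‖ ^ 2 * normSq L ((T0 L E k)^[n] x) := by
        intro n
        rw [T0_iter_smul, normSq_smul]
      simp only [this]
      exact hsx.mul_left _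


end Aux

theorem decaying_subspace_of_free_transfer_matrix
    (L : ℕ) [NeZero L] (E k : ℝ) (v : (ZMod L → ℂ) × (ZMod L → ℂ)) :
    Summable (fun n : ℕ => normSq L ((T0 L E k)^[n] v)) ↔
      v ∈ Submodule.span ℂ
        {w : (ZMod L → ℂ) × (ZMod L → ℂ) | ∃ (j : ZMod L) (μ : ℂ),
          ‖μ‖ < 1 ∧
          μ ^ 2 - ((E - 2 * Real.cos (k + 2 * Real.pi * (j.val : ℝ) / L) : ℝ) : ℂ) * μ + 1 = 0 ∧
          w = (μ • fourierVec L j, fourierVec L j)} := by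
  exact Aux.main L E k v
end
end
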